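/- Let n = 3, s = 1, π_1 = π_2 = π_3 = 1, a_{13} = a_{32} = a_{21} = 1 and all other coefficients a_{ij} = 0 and a_{i0} = 0. Let 0 < ε < 1/2 and define u⁰ = (u₁⁰, u₂⁰, u₃⁰) on (0,1) by u₁⁰(x) = 1; u₂⁰(x) = 3 for 0 < x < 1/2, u₂⁰(x) = 3 − ε^{-1}(x − 1/2) for 1/2 < x < 1/2 + ε, u₂⁰(x) = 2 for 1/2 + ε < x < 1; u₃⁰(x) = 9 for 0 < x < 1/2, u₃⁰(x) = 9 + ε^{-1}(x − 1/2) for 1/2 < x < 1/2 + ε, u₃⁰(x) = 10 for 1/2 + ε < x < 1. Then the entropy production ∫₀¹ (∂_x u⁰(x))ᵀ H(u⁰(x)) A(u⁰(x)) (∂_x u⁰(x)) dx ≤ −1/(6ε), where ∂_x u⁰ denotes the (almost everywhere defined) derivative of the piecewise linear function u⁰. -/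

import Mathlib

open Finset Real

noncomputable section

/-- The diffusion matrix `A(u)`: `A_{ij}(u) = δ_{ij}(a_{i0} + Σ_k a_{ik} u_k^s) + s a_{ij} u_i u_j^{s-1}`. -/
def matA (n : ℕ) (s : ℝ) (a0 : Fin n → ℝ) (a : Fin n → Fin n → ℝ) (u : Fin n → ℝ) :
    Matrix (Fin n) (Fin n) ℝ :=
  Matrix.of fun i j =>
    (if i = j then a0 i + ∑ k, a i k * u k ^ s else 0) + s * a i j * u i * u j ^ (s - 1)

/-- The entropy Hessian `H(u)`: `H_{ij}(u) = δ_{ij} s π_i u_i^{s-2}`. -/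
def matH (n : ℕ) (s : ℝ) (P : Fin n → ℝ) (u : Fin n → ℝ) : Matrix (Fin n) (Fin n) ℝ :=
  Matrix.of fun i j => if i = j then s * P i * u i ^ (s - 2) else 0

/-- The quadratic form `zᵀ M z`. -/
def quad (n : ℕ) (M : Matrix (Fin n) (Fin n) ℝ) (z : Fin n → ℝ) : ℝ :=
  ∑ i, ∑ j, z i * M i j * z j

open MeasureTheory

private lemma quadHA (c v w : ℝ) (hv : v ≠ 0) (hw : w ≠ 0) :
    ∑ i, ∑ j, (![(0:ℝ), -c, c] i)
      * ((matH 3 1 (fun _ => 1) ![1, v, w]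
          * matA 3 1 (fun _ => 0) ![![0, 0, 1], ![1, 0, 0], ![0, 1, 0]] ![1, v, w]) i j)
      * (![(0:ℝ), -c, c] j)
    = c ^ 2 * (v⁻¹ - 1 + v * w⁻¹) := by
  have h1 : (1:ℝ) - 1 = 0 := by norm_num
  have h2 : (1:ℝ) - 2 = -1 := by norm_num
  simp [matH, matA, Matrix.mul_apply, Fin.sum_univ_three, h1, h2,
    Real.rpow_one, Real.rpow_zero, Real.rpow_neg_one, Matrix.vecHead, Matrix.vecTail,
    Function.comp]
  field_simp
  ring

set_option maxHeartbeats 1000000 in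
theorem stmt16 (ε : ℝ) (hε : 0 < ε) (hε2 : ε < 1 / 2)
    (a : Fin 3 → Fin 3 → ℝ) (ha : a = ![![0, 0, 1], ![1, 0, 0], ![0, 1, 0]])
    (U : ℝ → Fin 3 → ℝ)
    (hU : U = fun x => ![1,
      if x < 1 / 2 then 3
        else if x < 1 / 2 + ε then 3 - ε⁻¹ * (x - 1 / 2) else 2,
      if x < 1 / 2 then 9
        else if x < 1 / 2 + ε then 9 + ε⁻¹ * (x - 1 / 2) else 10]) :
    ∫ x in Set.Ioo (0 : ℝ) 1,
        ∑ i, ∑ j, deriv (fun y => U y i) x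
          * (matH 3 1 (fun _ => 1) (U x) * matA 3 1 (fun _ => 0) a (U x)) i j
          * deriv (fun y => U y j) x
      ≤ -(1 / (6 * ε)) := by
  have hεne : ε ≠ 0 := hε.ne'
  set f : ℝ → ℝ := fun x =>
    ε⁻¹ ^ 2 * ((3 - ε⁻¹ * (x - 1/2))⁻¹ - 1
      + (3 - ε⁻¹ * (x - 1/2)) * (9 + ε⁻¹ * (x - 1/2))⁻¹) with hf
  set G : ℝ → ℝ := (Set.Ioo (1/2 : ℝ) (1/2 + ε)).indicator f with hGdef
  -- index 0 derivative is always 0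
  have hU0 : (fun y => U y 0) = fun _ => (1 : ℝ) := by funext y; simp [hU]
  have d0 : ∀ x : ℝ, deriv (fun y => U y 0) x = 0 := by
    intro x; rw [hU0]; exact deriv_const _ _
  -- bounds helper
  have hb : ∀ x : ℝ, 1/2 ≤ x → x ≤ 1/2 + ε →
      0 ≤ ε⁻¹ * (x - 1/2) ∧ ε⁻¹ * (x - 1/2) ≤ 1 := by
    intro x h1 h2
    refine ⟨mul_nonneg (inv_nonneg.2 hε.le) (by linarith), ?_⟩
    calc ε⁻¹ * (x - 1/2) ≤ ε⁻¹ * ε :=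
          mul_le_mul_of_nonneg_left (by linarith) (inv_nonneg.2 hε.le)
      _ = 1 := inv_mul_cancel₀ hεne
  have hval1 : ∀ y : ℝ, U y 1 =
      (if y < 1/2 then 3 else if y < 1/2 + ε then 3 - ε⁻¹ * (y - 1/2) else 2) := by
    intro y; rw [hU]; rfl
  have hval2 : ∀ y : ℝ, U y 2 =
      (if y < 1/2 then 9 else if y < 1/2 + ε then 9 + ε⁻¹ * (y - 1/2) else 10) := by
    intro y; rw [hU]; rfl
  -- a.e. equality of the integrand with G on (0,1)
  have hnull : ∀ᵐ x : ℝ, x ∉ ({1/2, 1/2 + ε} : Set ℝ) := by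
    refine measure_eq_zero_iff_ae_notMem.mp ?_
    exact measure_union_null (measure_singleton _) (measure_singleton _)
  have key : (fun x => ∑ i, ∑ j, deriv (fun y => U y i) x
          * (matH 3 1 (fun _ => 1) (U x) * matA 3 1 (fun _ => 0) a (U x)) i j
          * deriv (fun y => U y j) x)
        =ᵐ[volume.restrict (Set.Ioo (0:ℝ) 1)] G := by
    refine (ae_restrict_iff' measurableSet_Ioo).mpr ?_
    filter_upwards [hnull] with x hxs hxI
    simp only [Set.mem_insert_iff, Set.mem_singleton_iff, not_or] at hxs
    obtain ⟨hx1, hx2⟩ := hxs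
    rcases lt_trichotomy x (1/2) with hL | hE | hR
    · -- left constant region
      have hmem : Set.Ioo (0:ℝ) (1/2) ∈ nhds x := isOpen_Ioo.mem_nhds ⟨hxI.1, hL⟩
      have e1 : (fun y => U y 1) =ᶠ[nhds x] fun _ => (3:ℝ) := by
        filter_upwards [hmem] with y hy
        rw [hval1, if_pos hy.2]
      have e2 : (fun y => U y 2) =ᶠ[nhds x] fun _ => (9:ℝ) := by
        filter_upwards [hmem] with y hy
        rw [hval2, if_pos hy.2]
      have d1 : deriv (fun y => U y 1) x = 0 := by rw [e1.deriv_eq]; exact deriv_const _ _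
      have d2 : deriv (fun y => U y 2) x = 0 := by rw [e2.deriv_eq]; exact deriv_const _ _
      rw [hGdef, Set.indicator_of_notMem (fun hmm => absurd hmm.1 (not_lt.2 hL.le))]
      simp [Fin.sum_univ_three, d0, d1, d2]
    · exact absurd hE hx1
    rcases lt_trichotomy x (1/2 + ε) with hM | hE2 | hRR
    · -- middle region
      have hmem : Set.Ioo (1/2 : ℝ) (1/2 + ε) ∈ nhds x := isOpen_Ioo.mem_nhds ⟨hR, hM⟩
      have e1 : (fun y => U y 1) =ᶠ[nhds x] fun y => 3 - ε⁻¹ * (y - 1/2) := by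
        filter_upwards [hmem] with y hy
        rw [hval1, if_neg (not_lt.2 hy.1.le), if_pos hy.2]
      have e2 : (fun y => U y 2) =ᶠ[nhds x] fun y => 9 + ε⁻¹ * (y - 1/2) := by
        filter_upwards [hmem] with y hy
        rw [hval2, if_neg (not_lt.2 hy.1.le), if_pos hy.2]
      have hva : HasDerivAt (fun y : ℝ => 3 - ε⁻¹ * (y - 1/2)) (-(ε⁻¹ * 1)) x :=
        (HasDerivAt.const_mul ε⁻¹ ((hasDerivAt_id x).sub_const (1/2))).const_sub 3
      have hwa : HasDerivAt (fun y : ℝ => 9 + ε⁻¹ * (y - 1/2)) (ε⁻¹ * 1) x :=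
        (HasDerivAt.const_mul ε⁻¹ ((hasDerivAt_id x).sub_const (1/2))).const_add 9
      have d1 : deriv (fun y => U y 1) x = -ε⁻¹ := by
        rw [e1.deriv_eq, hva.deriv]; ring
      have d2 : deriv (fun y => U y 2) x = ε⁻¹ := by
        rw [e2.deriv_eq, hwa.deriv]; ring
      obtain ⟨hb1, hb2⟩ := hb x hR.le hM.le
      have hUx : U x = ![1, 3 - ε⁻¹ * (x - 1/2), 9 + ε⁻¹ * (x - 1/2)] := by
        funext i
        fin_cases i
        · simp [hU]
        · rw [show (⟨1, by norm_num⟩ : Fin 3) = (1 : Fin 3) from rfl, hval1,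
            if_neg (not_lt.2 hR.le), if_pos hM]
          simp
        · rw [show (⟨2, by norm_num⟩ : Fin 3) = (2 : Fin 3) from rfl, hval2,
            if_neg (not_lt.2 hR.le), if_pos hM]
          simp
      have hz : ∀ k : Fin 3, deriv (fun y => U y k) x = ![(0:ℝ), -ε⁻¹, ε⁻¹] k := by
        intro k
        fin_cases k
        · simpa using d0 x
        · simpa using d1
        · simpa using d2
      rw [hGdef, Set.indicator_of_mem (Set.mem_Ioo.mpr ⟨hR, hM⟩)]
      calc ∑ i, ∑ j, deriv (fun y => U y i) x
              * (matH 3 1 (fun _ => 1) (U x) * matA 3 1 (fun _ => 0) a (U x)) i j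
              * deriv (fun y => U y j) x
          = ∑ i, ∑ j, (![(0:ℝ), -ε⁻¹, ε⁻¹] i)
              * ((matH 3 1 (fun _ => 1) ![1, 3 - ε⁻¹ * (x - 1/2), 9 + ε⁻¹ * (x - 1/2)]
                  * matA 3 1 (fun _ => 0) ![![0, 0, 1], ![1, 0, 0], ![0, 1, 0]]
                    ![1, 3 - ε⁻¹ * (x - 1/2), 9 + ε⁻¹ * (x - 1/2)]) i j)
              * (![(0:ℝ), -ε⁻¹, ε⁻¹] j) := by
            rw [ha, hUx]
            exact Finset.sum_congr rfl fun i _ =>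
              Finset.sum_congr rfl fun j _ => by rw [hz i, hz j]
        _ = ε⁻¹ ^ 2 * ((3 - ε⁻¹ * (x - 1/2))⁻¹ - 1
              + (3 - ε⁻¹ * (x - 1/2)) * (9 + ε⁻¹ * (x - 1/2))⁻¹) :=
            quadHA _ _ _ (by linarith) (by linarith)
        _ = f x := rfl
    · exact absurd hE2 hx2
    · -- right constant region
      have hmem : Set.Ioo (1/2 + ε) (1:ℝ) ∈ nhds x := isOpen_Ioo.mem_nhds ⟨hRR, hxI.2⟩
      have e1 : (fun y => U y 1) =ᶠ[nhds x] fun _ => (2:ℝ) := by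
        filter_upwards [hmem] with y hy
        have h1 : ¬ y < 1/2 := by push_neg; linarith [hy.1]
        have h2 : ¬ y < 1/2 + ε := not_lt.2 hy.1.le
        rw [hval1, if_neg h1, if_neg h2]
      have e2 : (fun y => U y 2) =ᶠ[nhds x] fun _ => (10:ℝ) := by
        filter_upwards [hmem] with y hy
        have h1 : ¬ y < 1/2 := by push_neg; linarith [hy.1]
        have h2 : ¬ y < 1/2 + ε := not_lt.2 hy.1.le
        rw [hval2, if_neg h1, if_neg h2]
      have d1 : deriv (fun y => U y 1) x = 0 := by rw [e1.deriv_eq]; exact deriv_const _ _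
      have d2 : deriv (fun y => U y 2) x = 0 := by rw [e2.deriv_eq]; exact deriv_const _ _
      rw [hGdef, Set.indicator_of_notMem (fun hmm => absurd hmm.2 (not_lt.2 hRR.le))]
      simp [Fin.sum_univ_three, d0, d1, d2]
  rw [integral_congr_ae key]
  -- continuity and integrability of f on the middle interval
  have hvcont : Continuous fun x : ℝ => 3 - ε⁻¹ * (x - 1/2) :=
    continuous_const.sub (continuous_const.mul (continuous_id.sub continuous_const))
  have hwcont : Continuous fun x : ℝ => 9 + ε⁻¹ * (x - 1/2) :=
    continuous_const.add (continuous_const.mul (continuous_id.sub continuous_const))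
  have hfc : ContinuousOn f (Set.Icc (1/2 : ℝ) (1/2 + ε)) := by
    apply continuousOn_const.mul
    apply ContinuousOn.add
    · apply ContinuousOn.sub _ continuousOn_const
      exact hvcont.continuousOn.inv₀ fun x hx => by
        obtain ⟨h1, h2⟩ := hb x hx.1 hx.2; exact ne_of_gt (by linarith)
    · exact hvcont.continuousOn.mul (hwcont.continuousOn.inv₀ fun x hx => by
        obtain ⟨h1, h2⟩ := hb x hx.1 hx.2; exact ne_of_gt (by linarith))
  have hintf : IntegrableOn f (Set.Ioo (1/2 : ℝ) (1/2 + ε)) :=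
    hfc.integrableOn_Icc.mono_set Set.Ioo_subset_Icc_self
  have hGI : ∫ x in Set.Ioo (0:ℝ) 1, G x = ∫ x in Set.Ioo (1/2 : ℝ) (1/2 + ε), f x := by
    rw [hGdef, setIntegral_indicator measurableSet_Ioo,
      Set.inter_eq_self_of_subset_right (Set.Ioo_subset_Ioo (by linarith) (by linarith))]
  rw [hGI]
  -- pointwise bound on the middle interval
  have hbound : ∀ x ∈ Set.Ioo (1/2 : ℝ) (1/2 + ε), f x ≤ -(1/(6 * ε^2)) := by
    intro x hx
    obtain ⟨h1, h2⟩ := hb x hx.1.le hx.2.le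
    set v : ℝ := 3 - ε⁻¹ * (x - 1/2) with hv
    set w : ℝ := 9 + ε⁻¹ * (x - 1/2) with hw
    have hfx : f x = ε⁻¹ ^ 2 * (v⁻¹ - 1 + v * w⁻¹) := rfl
    have hv2 : 2 ≤ v := by rw [hv]; linarith
    have hv3 : v ≤ 3 := by rw [hv]; linarith
    have hw12 : w = 12 - v := by rw [hv, hw]; ring
    have hvpos : 0 < v := by linarith
    have hwpos : 0 < w := by rw [hw12]; linarith
    clear_value v w
    have hkey : v⁻¹ - 1 + v * w⁻¹ ≤ -(1/6) := by
      have hvne : v ≠ 0 := ne_of_gt hvpos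
      have h12 : (12:ℝ) - v ≠ 0 := by linarith
      have heq : v⁻¹ - 1 + v * w⁻¹ + 1/6 = (11*v^2 - 66*v + 72) / (6 * (v * w)) := by
        rw [hw12]
        field_simp
        ring
      have hnum : 11*v^2 - 66*v + 72 ≤ 0 := by
        nlinarith [mul_nonneg (by linarith : (0:ℝ) ≤ v - 2) (by linarith : (0:ℝ) ≤ 3 - v)]
      have hden : 0 < 6 * (v * w) := by positivity
      have hle : (11*v^2 - 66*v + 72) / (6 * (v * w)) ≤ 0 :=
        div_nonpos_iff.mpr (Or.inr ⟨hnum, hden.le⟩)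
      linarith [heq, hle]
    rw [hfx]
    have h3 : ε⁻¹ ^ 2 * (v⁻¹ - 1 + v * w⁻¹) ≤ ε⁻¹ ^ 2 * (-(1/6)) :=
      mul_le_mul_of_nonneg_left hkey (sq_nonneg _)
    have h4 : ε⁻¹ ^ 2 * (-(1/6)) = -(1/(6 * ε^2)) := by
      field_simp
    linarith [h3, h4]
  have hconst : IntegrableOn (fun _ : ℝ => -(1/(6 * ε^2))) (Set.Ioo (1/2 : ℝ) (1/2 + ε)) :=
    integrableOn_const measure_Ioo_lt_top.ne
  calc ∫ x in Set.Ioo (1/2 : ℝ) (1/2 + ε), f x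
      ≤ ∫ _x in Set.Ioo (1/2 : ℝ) (1/2 + ε), -(1/(6 * ε^2)) :=
        setIntegral_mono_on hintf hconst measurableSet_Ioo hbound
    _ = -(1 / (6 * ε)) := by
        rw [setIntegral_const, measureReal_def, Real.volume_Ioo, smul_eq_mul,
          show (1/2 + ε - 1/2 : ℝ) = ε by ring, ENNReal.toReal_ofReal hε.le]
        field_simp
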